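/- For all integers n ≥ 3 and m ≥ 2, the windmill graph W_n^m, consisting of m copies of the complete graph K_n all sharing exactly one common vertex (i.e. W_n^m = (m·K_{n−1}) ∨ K₁), satisfies η(W_n^m) = n − 1. -/

import Mathlib

open Classical in
/-- Sum of the labels `f` over the open neighborhood of `v` in `G`. -/
noncomputable def nbrSum {V : Type*} [Fintype V] (G : SimpleGraph V) (f : V → ℕ) (v : V) : ℕ :=
  ∑ w ∈ Finset.univ.filter (fun w => G.Adj v w), f w

open Classical in
/-- The degree of `v` in `G`. -/
noncomputable def deg {V : Type*} [Fintype V] (G : SimpleGraph V) (v : V) : ℕ :=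
  (Finset.univ.filter (fun w => G.Adj v w)).card

/-- `f : V → {1,…,k}` is an additive `k`-coloring of `G`: labels lie in `{1,…,k}` and
adjacent vertices get distinct open-neighborhood sums. -/
def IsAdditiveColoring {V : Type*} [Fintype V] (G : SimpleGraph V) (k : ℕ) (f : V → ℕ) : Prop :=
  (∀ v, 1 ≤ f v ∧ f v ≤ k) ∧ ∀ u v, G.Adj u v → nbrSum G f u ≠ nbrSum G f v

/-- The additive chromatic number `η(G)`: the least `k` admitting an additive `k`-coloring. -/
noncomputable def eta {V : Type*} [Fintype V] (G : SimpleGraph V) : ℕ :=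
  sInf {k | ∃ f : V → ℕ, IsAdditiveColoring G k f}

/-- The join `G ∨ K_q` of `G` with the complete graph on `q` vertices. -/
def joinK {α : Type*} (G : SimpleGraph α) (q : ℕ) : SimpleGraph (α ⊕ Fin q) where
  Adj x y :=
    match x, y with
    | Sum.inl u, Sum.inl v => G.Adj u v
    | Sum.inr i, Sum.inr j => i ≠ j
    | Sum.inl _, Sum.inr _ => True
    | Sum.inr _, Sum.inl _ => True
  symm := ⟨by
    rintro (u | i) (v | j) h
    · exact G.adj_symm h
    · trivial
    · trivial
    · exact Ne.symm h⟩
  loopless := ⟨by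
    rintro (u | i) h
    · exact G.irrefl h
    · exact h rfl⟩

/-- The disjoint union of `m` copies of the complete graph `K_t`. -/
def copiesK (m t : ℕ) : SimpleGraph (Fin m × Fin t) where
  Adj x y := x.1 = y.1 ∧ x.2 ≠ y.2
  symm := ⟨by rintro ⟨a, b⟩ ⟨c, d⟩ ⟨h1, h2⟩; exact ⟨h1.symm, h2.symm⟩⟩
  loopless := ⟨by rintro ⟨a, b⟩ ⟨_, h⟩; exact h rfl⟩

open Classical

lemma nbrSum_eq_sum_ite {V : Type*} [Fintype V] (G : SimpleGraph V) (f : V → ℕ) (v : V) :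
    nbrSum G f v = ∑ w, if G.Adj v w then f w else 0 := by
  rw [nbrSum, Finset.sum_filter]

lemma nbrSum_center (m t : ℕ) (f : (Fin m × Fin t ⊕ Fin 1) → ℕ) :
    nbrSum (joinK (copiesK m t) 1) f (Sum.inr 0) = ∑ p : Fin m × Fin t, f (Sum.inl p) := by
  rw [nbrSum_eq_sum_ite, Fintype.sum_sum_type]
  simp [joinK, Fin.eq_zero]

lemma nbrSum_blade (m t : ℕ) (f : (Fin m × Fin t ⊕ Fin 1) → ℕ) (i : Fin m) (j : Fin t) :
    nbrSum (joinK (copiesK m t) 1) f (Sum.inl (i, j)) + f (Sum.inl (i, j)) =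
      f (Sum.inr 0) + ∑ j' : Fin t, f (Sum.inl (i, j')) := by
  rw [nbrSum_eq_sum_ite, Fintype.sum_sum_type]
  have h1 : (∑ b : Fin 1, if (joinK (copiesK m t) 1).Adj (Sum.inl (i,j)) (Sum.inr b) then f (Sum.inr b) else 0) = f (Sum.inr 0) := by
    simp [joinK, Fin.eq_zero]
  have h2 : (∑ p : Fin m × Fin t, if (joinK (copiesK m t) 1).Adj (Sum.inl (i,j)) (Sum.inl p) then f (Sum.inl p) else 0)
      = ∑ j' ∈ Finset.univ.erase j, f (Sum.inl (i, j')) := by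
    rw [Fintype.sum_prod_type]
    rw [Finset.sum_eq_single i]
    · simp only [joinK, copiesK]
      rw [← Finset.sum_filter]
      congr 1
      ext j'
      simp [ne_comm, eq_comm]
    · intro b _ hb
      simp only [joinK, copiesK]
      apply Finset.sum_eq_zero
      intro j' _
      simp [Ne.symm hb, hb.symm]
    · intro h; exact absurd (Finset.mem_univ i) h
  rw [h1, h2, add_right_comm]
  rw [Finset.sum_erase_add Finset.univ _ (Finset.mem_univ j)]
  ring

lemma eta_aux (t m : ℕ) (ht : 2 ≤ t) (hm : 2 ≤ m) :
    eta (joinK (copiesK m t) 1) = t := by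
  rw [eta]
  simp only [IsAdditiveColoring]
  set W := joinK (copiesK m t) 1 with hW
  set T := ∑ j : Fin t, (j.val + 1) with hT
  have hTt : t ≤ T := by
    calc t = ∑ _j : Fin t, 1 := by simp
    _ ≤ T := Finset.sum_le_sum (fun j _ => by omega)
  -- the coloring
  set f : (Fin m × Fin t ⊕ Fin 1) → ℕ := Sum.elim (fun p => p.2.val + 1) (fun _ => 1) with hf
  have hblade : ∀ i : Fin m, ∑ j' : Fin t, f (Sum.inl (i, j')) = T := by
    intro i; rfl
  have hbladeSum : ∀ (i : Fin m) (j : Fin t),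
      nbrSum W f (Sum.inl (i, j)) + (j.val + 1) = 1 + T := by
    intro i j
    have := nbrSum_blade m t f i j
    rw [hblade] at this
    simpa [hf] using this
  have hcenter : nbrSum W f (Sum.inr 0) = m * T := by
    rw [nbrSum_center, Fintype.sum_prod_type]
    simp [hblade, Finset.sum_const]
  have hmem : ∃ g : (Fin m × Fin t ⊕ Fin 1) → ℕ,
      (∀ v, 1 ≤ g v ∧ g v ≤ t) ∧
      ∀ u v, W.Adj u v → nbrSum W g u ≠ nbrSum W g v := by
    refine ⟨f, ?_, ?_⟩
    · rintro (⟨i, j⟩ | x)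
      · simp only [hf, Sum.elim_inl]
        have := j.isLt
        omega
      · simp only [hf, Sum.elim_inr]
        omega
    · rintro (⟨i, j⟩ | x) (⟨i', j'⟩ | y) h heq
      · obtain ⟨hi, hj⟩ : i = i' ∧ j ≠ j' := h
        have h1 := hbladeSum i j
        have h2 := hbladeSum i' j'
        rw [← heq] at h2
        have : j.val = j'.val := by omega
        exact hj (Fin.ext this)
      · -- inl vs center
        have h1 := hbladeSum i j
        have hy : y = 0 := Subsingleton.elim _ _
        rw [hy, hcenter] at heq
        have hj1 : 1 ≤ j.val + 1 := by omega
        nlinarith [j.isLt]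
      · have h1 := hbladeSum i' j'
        have hx : x = 0 := Subsingleton.elim _ _
        rw [hx, hcenter] at heq
        nlinarith [j'.isLt]
      · exact h (Subsingleton.elim x y)
  apply le_antisymm
  · exact Nat.sInf_le hmem
  · apply le_csInf ⟨t, hmem⟩
    rintro k ⟨g, hg1, hg2⟩
    -- blade 0 gives t distinct labels in [1,k]
    have i0 : Fin m := ⟨0, by omega⟩
    have key : Set.InjOn (fun j : Fin t => g (Sum.inl (i0, j))) ↑(Finset.univ : Finset (Fin t)) := by
      intro j _ j' _ hjj
      by_contra hne
      have hadj : W.Adj (Sum.inl (i0, j)) (Sum.inl (i0, j')) := ⟨rfl, hne⟩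
      apply hg2 _ _ hadj
      have h1 := nbrSum_blade m t g i0 j
      have h2 := nbrSum_blade m t g i0 j'
      rw [← hW] at h1 h2
      simp only at hjj
      omega
    have hmaps : ∀ j : Fin t, (fun j : Fin t => g (Sum.inl (i0, j))) j ∈ Finset.Icc 1 k := by
      intro j
      simp only [Finset.mem_Icc]
      exact hg1 _
    calc t = (Finset.univ : Finset (Fin t)).card := by simp
    _ ≤ (Finset.Icc 1 k).card :=
        Finset.card_le_card_of_injOn _ (fun j _ => hmaps j) key
    _ = k := by simp

/-- For `n ≥ 3` and `m ≥ 2`, the windmill `W_n^m = (m·K_{n-1}) ∨ K₁`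
satisfies `η(W_n^m) = n - 1`. -/
theorem eta_windmill (n m : ℕ) (hn : 3 ≤ n) (hm : 2 ≤ m) :
    eta (joinK (copiesK m (n - 1)) 1) = n - 1 := by
  exact eta_aux (n - 1) m (by omega) hm
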